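/- Let w, a', b', c' be rational numbers with w·c' ≠ a'·b', and let λ', μ' be complex numbers satisfying λ' + μ' = w + c' and λ'·μ' = w·c' − a'·b' (i.e., λ' and μ' are the eigenvalues of the matrix [[w, b'], [a', c']]). Set A = w + c' and B = (c' − w)² + 4a'b'. Then μ' ≠ 0, and if there exists a positive integer n with (λ')ⁿ = (μ')ⁿ (i.e., the ratio λ'/μ' is a root of unity), then at least one of the following holds: A = 0, B = 0, A² + B = 0, A² + 3B = 0, or 3A² + B = 0. -/

import Mathlib

theorem stmt_3 (w a' b' c' : ℚ) (h : w * c' ≠ a' * b') (lam mu : ℂ)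
    (hsum : lam + mu = (w : ℂ) + (c' : ℂ))
    (hprod : lam * mu = (w : ℂ) * c' - (a' : ℂ) * b') :
    mu ≠ 0 ∧
    ((∃ n : ℕ, 0 < n ∧ lam ^ n = mu ^ n) →
      (w + c' = 0 ∨ (c' - w) ^ 2 + 4 * a' * b' = 0 ∨
       (w + c') ^ 2 + ((c' - w) ^ 2 + 4 * a' * b') = 0 ∨
       (w + c') ^ 2 + 3 * ((c' - w) ^ 2 + 4 * a' * b') = 0 ∨
       3 * (w + c') ^ 2 + ((c' - w) ^ 2 + 4 * a' * b') = 0)) := by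
  have hCq : (w * c' - a' * b' : ℚ) ≠ 0 := sub_ne_zero.mpr h
  have hCc : ((w * c' - a' * b' : ℚ) : ℂ) ≠ 0 := by exact_mod_cast hCq
  have hprodC : lam * mu = ((w * c' - a' * b' : ℚ) : ℂ) := by push_cast; exact hprod
  have hlm : lam * mu ≠ 0 := by rw [hprodC]; exact hCc
  have hmu : mu ≠ 0 := right_ne_zero_of_mul hlm
  have hlam : lam ≠ 0 := left_ne_zero_of_mul hlm
  refine ⟨hmu, ?_⟩
  rintro ⟨n, hn, heq⟩
  set A : ℚ := w + c' with hA
  set C : ℚ := w * c' - a' * b' with hC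
  set q : ℚ := (A ^ 2 - 2 * C) / C with hqdef
  set r : ℂ := lam / mu with hrdef
  have hr : r ^ n = 1 := by
    rw [hrdef, div_pow, heq, div_self (pow_ne_zero _ hmu)]
  have hrne : r ≠ 0 := div_ne_zero hlam hmu
  have habs : ‖r‖ = 1 := by
    have h2 : ‖r‖ ^ n = 1 := by
      rw [← norm_pow, hr, norm_one]
    rcases (pow_eq_one_iff_cases).mp h2 with h3 | h3 | h3
    · omega
    · exact h3
    · nlinarith [norm_nonneg r, h3.1]
  have h1 : lam ^ 2 + mu ^ 2 = ((A ^ 2 - 2 * C : ℚ) : ℂ) := by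
    rw [hA, hC]
    push_cast
    linear_combination (lam + mu + (w : ℂ) + (c' : ℂ)) * hsum - 2 * hprod
  have hcast : (q : ℂ) * ((C : ℚ) : ℂ) = ((A ^ 2 - 2 * C : ℚ) : ℂ) := by
    rw [hqdef]
    push_cast
    field_simp
  have hq : r + r⁻¹ = (q : ℂ) := by
    rw [hrdef, inv_div, div_add_div _ _ hmu hlam, div_eq_iff (mul_ne_zero hmu hlam)]
    have hml : mu * lam = ((C : ℚ) : ℂ) := by rw [mul_comm]; exact hprodC
    rw [hml, hcast, ← h1]
    ring
  have hint_r : IsIntegral ℤ r := by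
    refine ⟨Polynomial.X ^ n - Polynomial.C 1, ?_, ?_⟩
    · simpa using Polynomial.monic_X_pow_sub_C (1 : ℤ) hn.ne'
    · simp [Polynomial.eval₂_sub, hr]
  have hrinv : r⁻¹ = r ^ (n - 1) := by
    apply inv_eq_of_mul_eq_one_right
    rw [← pow_succ']
    have : n - 1 + 1 = n := by omega
    rw [this, hr]
  have hint_q : IsIntegral ℤ ((q : ℚ) : ℂ) := by
    rw [← hq, hrinv]
    exact hint_r.add (hint_r.pow _)
  have hint_q' : IsIntegral ℤ q := by
    have hinj : Function.Injective (algebraMap ℚ ℂ) := (algebraMap ℚ ℂ).injective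
    have : algebraMap ℚ ℂ q = ((q : ℚ) : ℂ) := by
      exact eq_ratCast (algebraMap ℚ ℂ) q
    exact (isIntegral_algebraMap_iff hinj).mp (this ▸ hint_q)
  obtain ⟨z, hz⟩ := IsIntegrallyClosed.isIntegral_iff.mp hint_q'
  have hzq : (z : ℚ) = q := hz
  have hqabs : |q| ≤ 2 := by
    have h4 : ‖((q : ℚ) : ℂ)‖ ≤ 2 := by
      rw [← hq]
      calc ‖r + r⁻¹‖ ≤ ‖r‖ + ‖r⁻¹‖ :=
            norm_add_le _ _
        _ = 2 := by rw [norm_inv, habs]; norm_num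
    rw [show ((q : ℚ) : ℂ) = (((q : ℝ) : ℝ) : ℂ) by push_cast; ring,
      Complex.norm_real, Real.norm_eq_abs] at h4
    exact_mod_cast h4
  have hzb : -2 ≤ z ∧ z ≤ 2 := by
    rw [← hzq, abs_le] at hqabs
    exact ⟨by exact_mod_cast hqabs.1, by exact_mod_cast hqabs.2⟩
  have key : A ^ 2 - 2 * C = z * C := by
    have := hzq
    rw [hqdef, eq_div_iff hCq] at this
    linarith [this]
  obtain ⟨hz1, hz2⟩ := hzb
  interval_cases z
  · -- z = -2 : A^2 = 0
    left
    have hA2 : A ^ 2 = 0 := by push_cast at key; linarith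
    have := pow_eq_zero_iff (n := 2) (by norm_num) |>.mp hA2
    rw [hA] at this; exact this
  · -- z = -1 : 3A^2 + B = 0
    right; right; right; right
    push_cast at key
    simp only [hA, hC] at key ⊢
    linear_combination 4 * key
  · -- z = 0 : A^2 + B = 0
    right; right; left
    push_cast at key
    simp only [hA, hC] at key ⊢
    linear_combination 2 * key
  · -- z = 1 : A^2 + 3B = 0
    right; right; right; left
    push_cast at key
    simp only [hA, hC] at key ⊢
    linear_combination 4 * key
  · -- z = 2 : B = 0
    right; left
    push_cast at key
    simp only [hA, hC] at key ⊢
    linear_combination key
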